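/- arXiv:1912.04369 — 3 statements merged into one kernel-verified Lean document; each statement's English description precedes it below -/
import Mathlib

section
/- Let m be a positive integer and let h : ℤ_{≥0}^m → ℤ be order-preserving and bounded above. Then there exists a single finite subset S ⊆ ℤ_{≥0}^m such that for every integer c one has { w ∈ ℤ_{≥0}^m : h(w) ≥ c } = ⋃_{s ∈ S, h(s) ≥ c} ( s + ℤ_{≥0}^m ). In particular, for every w ∈ ℤ_{≥0}^m there exists s ∈ S with w ≽ s and h(s) = h(w). -/
/-- **Uniform corners for a bounded monotone function on `ℤ_{≥0}^m`.**
Let `h : ℤ_{≥0}^m → ℤ` (with `ℤ_{≥0}^m` modeled as `Fin m → ℕ`, componentwise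
order) be order-preserving and bounded above.  Then there is a single finite set
`S ⊆ ℤ_{≥0}^m` such that for every integer `c`,
`{w | h w ≥ c} = ⋃_{s ∈ S, h s ≥ c} (s + ℤ_{≥0}^m)`
(the translate `s + ℤ_{≥0}^m` being `{w | s ≤ w}`); in particular every
`w ∈ ℤ_{≥0}^m` satisfies `w ≽ s` for some `s ∈ S` with `h s = h w`. -/
theorem exists_uniform_corner_set
    (m : ℕ) (hm : 0 < m)
    (h : (Fin m → ℕ) → ℤ)
    (hmono : ∀ w w' : Fin m → ℕ, w' ≤ w → h w' ≤ h w)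
    (hbdd : ∃ B : ℤ, ∀ w : Fin m → ℕ, h w ≤ B) :
    ∃ S : Finset (Fin m → ℕ),
      (∀ c : ℤ, {w : Fin m → ℕ | c ≤ h w}
          = ⋃ s ∈ S, ⋃ (_ : c ≤ h s), {w : Fin m → ℕ | s ≤ w}) ∧
      (∀ w : Fin m → ℕ, ∃ s ∈ S, s ≤ w ∧ h s = h w) := by
  classical
  obtain ⟨B, hB⟩ := hbdd
  -- every point of an upper level set lies above a minimal point of it
  have hmin : ∀ (c : ℤ) (w : Fin m → ℕ), c ≤ h w →
      ∃ s, s ≤ w ∧ Minimal (fun v => c ≤ h v) s := by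
    intro c w hw
    obtain ⟨s, hs, hsmin⟩ := (wellFounded_lt (α := Fin m → ℕ)).has_min
      {v | v ≤ w ∧ c ≤ h v} ⟨w, le_refl w, hw⟩
    refine ⟨s, hs.1, hs.2, fun t ht hts => ?_⟩
    have : ¬ t < s := hsmin t ⟨hts.trans hs.1, ht⟩
    exact le_of_eq ((lt_or_eq_of_le hts).resolve_left this).symm
  -- the set of minimal points of each level set is finite (Dickson's lemma)
  have inst : ∀ _ : Fin m, IsWellOrder ℕ (· < ·) := fun _ => inferInstance
  have hpwo : Set.IsPWO (Set.univ : Set (Fin m → ℕ)) :=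
    Set.isPWO_of_wellQuasiOrderedLE _
  have hfin : ∀ c : ℤ, {v | Minimal (fun v => c ≤ h v) v}.Finite := fun c =>
    (setOf_minimal_antichain _).finite_of_partiallyWellOrderedOn
      (hpwo.mono (Set.subset_univ _))
  refine ⟨(Finset.Icc (h 0) B).biUnion (fun c => (hfin c).toFinset), ?_, ?_⟩
  · intro c
    ext w
    simp only [Set.mem_setOf_eq, Set.mem_iUnion, Finset.mem_biUnion, Finset.mem_Icc,
      Set.Finite.mem_toFinset, Set.mem_setOf_eq, exists_prop]
    constructor
    · intro hw
      have h0w : h 0 ≤ h w := hmono w 0 (by intro i; exact Nat.zero_le _)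
      set c' := max c (h 0) with hc'
      obtain ⟨s, hsw, hsmin⟩ := hmin c' w (max_le hw h0w)
      refine ⟨s, ⟨⟨c', ⟨le_max_right _ _, le_trans (max_le hw h0w) (hB w)⟩, hsmin⟩,
        le_trans (le_max_left _ _) hsmin.1, hsw⟩⟩
    · rintro ⟨s, ⟨-, hcs, hsw⟩⟩
      exact hcs.trans (hmono w s hsw)
  · intro w
    obtain ⟨s, hsw, hsmin⟩ := hmin (h w) w le_rfl
    have h0w : h 0 ≤ h w := hmono w 0 (by intro i; exact Nat.zero_le _)
    refine ⟨s, ?_, hsw, le_antisymm (hmono w s hsw) hsmin.1⟩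
    simp only [Finset.mem_biUnion, Finset.mem_Icc, Set.Finite.mem_toFinset]
    exact ⟨h w, ⟨h0w, hB w⟩, hsmin⟩
end

section
/- Let G be a subgroup of W = V ⋊ S_4 such that: (i) the projection p : G → S_4 is surjective; (ii) the kernel of p restricted to G is exactly {(0, id), σ}, i.e. G ∩ V = {0, ε}; and (iii) the extension does not split, i.e. there is no subgroup H ≤ G for which p restricts to an isomorphism from H onto S_4. Then the affine action of G on V is transitive; equivalently, V consists of a single G-orbit of size 16. -/
/-- `V = (ℤ/2ℤ)⁴`. -/
abbrev V4 : Type := Fin 4 → ZMod 2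

/-- The action of `S₄` on `V = (ℤ/2ℤ)⁴` permuting the coordinates,
as an additive automorphism. -/
def permAddEquiv (π : Equiv.Perm (Fin 4)) : V4 ≃+ V4 where
  toFun w := fun i => w (π⁻¹ i)
  invFun w := fun i => w (π i)
  left_inv w := by funext i; simp
  right_inv w := by funext i; simp
  map_add' w₁ w₂ := rfl

/-- The corresponding homomorphism `S₄ →* Aut(V)` (with `V` written
multiplicatively so as to form the semidirect product). -/
def permHom : Equiv.Perm (Fin 4) →* MulAut (Multiplicative V4) where
  toFun π := AddEquiv.toMultiplicative (permAddEquiv π)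
  map_one' := by ext w; rfl
  map_mul' π₁ π₂ := by ext w; rfl

/-- `W = V ⋊ S₄`. -/
abbrev W4 : Type := SemidirectProduct (Multiplicative V4) (Equiv.Perm (Fin 4)) permHom

/-- `ε = (1,1,1,1) ∈ V`. -/
def epsV : V4 := fun _ => 1

/-- `σ = (ε, id) ∈ W`, the translation by `ε`. -/
def sigmaW : W4 := SemidirectProduct.inl (Multiplicative.ofAdd epsV)

/-- The affine action of `W = V ⋊ S₄` on `V`: `(v, π) · w = π(w) + v`. -/
def aff (g : W4) (w : V4) : V4 :=
  fun i => w (g.right⁻¹ i) + Multiplicative.toAdd g.left i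

/-! ### Basic lemmas about the affine action -/

section AffBasic

open SemidirectProduct

lemma toAdd_permHom_apply (π : Equiv.Perm (Fin 4)) (v : Multiplicative V4) (i : Fin 4) :
    Multiplicative.toAdd (permHom π v) i = Multiplicative.toAdd v (π⁻¹ i) := rfl

lemma aff_mul (g h : W4) (w : V4) : aff (g * h) w = aff g (aff h w) := by
  funext i
  simp only [aff, mul_right, mul_left, mul_inv_rev, Equiv.Perm.mul_apply, toAdd_mul,
    Pi.add_apply, toAdd_permHom_apply]
  ring

lemma aff_one (w : V4) : aff 1 w = w := by
  funext i
  simp [aff]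

lemma aff_inv (g : W4) (w : V4) : aff g⁻¹ (aff g w) = w := by
  rw [← aff_mul, inv_mul_cancel, aff_one]

lemma aff_sigma (w : V4) : aff sigmaW w = w + epsV := by
  funext i
  simp [aff, sigmaW, epsV]

lemma sigma_right : sigmaW.right = 1 := rfl

lemma aff_eps (g : W4) (v : V4) : aff g (v + epsV) = aff g v + epsV := by
  funext i
  simp only [aff, Pi.add_apply, epsV]
  ring

lemma eps_add_eps (v : V4) : v + epsV + epsV = v := by
  funext i
  show v i + epsV i + epsV i = v i
  have h : ∀ t : ZMod 2, t + 1 + 1 = t := by decide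
  exact h (v i)

lemma add_eps_ne (w : V4) : w + epsV ≠ w := by
  intro h
  have h0 := congrFun h 0
  have : ∀ t : ZMod 2, ¬(t + 1 = t) := by decide
  exact this (w 0) h0

end AffBasic

/-! ### A fast computational model on `Bool × Bool × Bool × Bool` -/

abbrev B4 : Type := Bool × Bool × Bool × Bool

def bxor4 : B4 → B4 → B4
  | (a0, a1, a2, a3), (b0, b1, b2, b3) => (xor a0 b0, xor a1 b1, xor a2 b2, xor a3 b3)

def sw1 : B4 → B4 | (a0, a1, a2, a3) => (a1, a0, a2, a3)
def sw2 : B4 → B4 | (a0, a1, a2, a3) => (a0, a2, a1, a3)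
def sw3 : B4 → B4 | (a0, a1, a2, a3) => (a0, a1, a3, a2)

def onesB : B4 := (true, true, true, true)
def zeroB : B4 := (false, false, false, false)

def FB (sw : B4 → B4) (c : B4) (x : B4) : B4 := bxor4 (sw x) c

def stepL (c1 c2 c3 : B4) (S : List B4) : List B4 :=
  (((S ∪ S.map (FB sw1 c1)) ∪ S.map (FB sw2 c2)) ∪ S.map (FB sw3 c3))
    ∪ S.map (fun x => bxor4 x onesB)

def orbL (c1 c2 c3 : B4) : ℕ → List B4
  | 0 => [zeroB]
  | n + 1 => stepL c1 c2 c3 (orbL c1 c2 c3 n)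

set_option synthInstance.maxSize 5000 in
set_option synthInstance.maxHeartbeats 1000000 in
set_option maxHeartbeats 16000000 in
set_option maxRecDepth 100000 in
lemma keyB : ∀ c1 : B4,
    (FB sw1 c1 (FB sw1 c1 zeroB) = zeroB ∨ FB sw1 c1 (FB sw1 c1 zeroB) = onesB) →
    ∀ c2 : B4,
    (FB sw2 c2 (FB sw2 c2 zeroB) = zeroB ∨ FB sw2 c2 (FB sw2 c2 zeroB) = onesB) →
    (FB sw1 c1 (FB sw2 c2 (FB sw1 c1 (FB sw2 c2 (FB sw1 c1 (FB sw2 c2 zeroB))))) = zeroB ∨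
     FB sw1 c1 (FB sw2 c2 (FB sw1 c1 (FB sw2 c2 (FB sw1 c1 (FB sw2 c2 zeroB))))) = onesB) →
    ∀ c3 : B4,
    (FB sw3 c3 (FB sw3 c3 zeroB) = zeroB ∨ FB sw3 c3 (FB sw3 c3 zeroB) = onesB) →
    (FB sw2 c2 (FB sw3 c3 (FB sw2 c2 (FB sw3 c3 (FB sw2 c2 (FB sw3 c3 zeroB))))) = zeroB ∨
     FB sw2 c2 (FB sw3 c3 (FB sw2 c2 (FB sw3 c3 (FB sw2 c2 (FB sw3 c3 zeroB))))) = onesB) →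
    (FB sw1 c1 (FB sw3 c3 (FB sw1 c1 (FB sw3 c3 zeroB))) = zeroB ∨
     FB sw1 c1 (FB sw3 c3 (FB sw1 c1 (FB sw3 c3 zeroB))) = onesB) →
    ((∃ w : B4, (FB sw1 c1 w = w ∨ FB sw1 c1 w = bxor4 w onesB) ∧
                (FB sw2 c2 w = w ∨ FB sw2 c2 w = bxor4 w onesB) ∧
                (FB sw3 c3 w = w ∨ FB sw3 c3 w = bxor4 w onesB)) ∨
      (∀ u : B4, u ∈ orbL c1 c2 c3 6)) := by decide

/-! ### The bridge between `V4` and the computational model -/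

abbrev tau1 : Equiv.Perm (Fin 4) := Equiv.swap 0 1
abbrev tau2 : Equiv.Perm (Fin 4) := Equiv.swap 1 2
abbrev tau3 : Equiv.Perm (Fin 4) := Equiv.swap 2 3

def zb (t : ZMod 2) : Bool := decide (t = 1)

def bz (b : Bool) : ZMod 2 := cond b 1 0

def eB (x : V4) : B4 := (zb (x 0), zb (x 1), zb (x 2), zb (x 3))

def sB (b : B4) : V4 := fun i =>
  match i with
  | 0 => bz b.1
  | 1 => bz b.2.1
  | 2 => bz b.2.2.1
  | 3 => bz b.2.2.2

lemma sB_eB (x : V4) : sB (eB x) = x := by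
  have h : ∀ t : ZMod 2, bz (zb t) = t := by decide
  funext i
  fin_cases i <;> exact h _

lemma eB_sB (b : B4) : eB (sB b) = b := by
  obtain ⟨b0, b1, b2, b3⟩ := b
  cases b0 <;> cases b1 <;> cases b2 <;> cases b3 <;> rfl

lemma eB_inj {x y : V4} (h : eB x = eB y) : x = y := by
  have := congrArg sB h
  rwa [sB_eB, sB_eB] at this

lemma eB_zero : eB 0 = zeroB := rfl

lemma eB_eps : eB epsV = onesB := rfl

lemma zb_add (t u : ZMod 2) : zb (t + u) = xor (zb t) (zb u) := by revert t u; decide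

lemma eB_add_eps (x : V4) : eB (x + epsV) = bxor4 (eB x) onesB := by
  simp only [eB, Pi.add_apply, epsV, bxor4, onesB, zb_add]
  rfl

lemma eB_aff₁ (g : W4) (hg : g.right = tau1) (x : V4) :
    eB (aff g x) = FB sw1 (eB (Multiplicative.toAdd g.left)) (eB x) := by
  have h0 : tau1⁻¹ (0 : Fin 4) = 1 := by decide
  have h1 : tau1⁻¹ (1 : Fin 4) = 0 := by decide
  have h2 : tau1⁻¹ (2 : Fin 4) = 2 := by decide
  have h3 : tau1⁻¹ (3 : Fin 4) = 3 := by decide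
  simp only [eB, aff, FB, sw1, bxor4, hg, h0, h1, h2, h3, zb_add]

lemma eB_aff₂ (g : W4) (hg : g.right = tau2) (x : V4) :
    eB (aff g x) = FB sw2 (eB (Multiplicative.toAdd g.left)) (eB x) := by
  have h0 : tau2⁻¹ (0 : Fin 4) = 0 := by decide
  have h1 : tau2⁻¹ (1 : Fin 4) = 2 := by decide
  have h2 : tau2⁻¹ (2 : Fin 4) = 1 := by decide
  have h3 : tau2⁻¹ (3 : Fin 4) = 3 := by decide
  simp only [eB, aff, FB, sw2, bxor4, hg, h0, h1, h2, h3, zb_add]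

lemma eB_aff₃ (g : W4) (hg : g.right = tau3) (x : V4) :
    eB (aff g x) = FB sw3 (eB (Multiplicative.toAdd g.left)) (eB x) := by
  have h0 : tau3⁻¹ (0 : Fin 4) = 0 := by decide
  have h1 : tau3⁻¹ (1 : Fin 4) = 1 := by decide
  have h2 : tau3⁻¹ (2 : Fin 4) = 3 := by decide
  have h3 : tau3⁻¹ (3 : Fin 4) = 2 := by decide
  simp only [eB, aff, FB, sw3, bxor4, hg, h0, h1, h2, h3, zb_add]

/-- The stabilizer of `w0` in `G` for the affine action. -/
def stabSub (G : Subgroup W4) (w0 : V4) : Subgroup W4 where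
  carrier := {g : W4 | g ∈ G ∧ aff g w0 = w0}
  one_mem' := ⟨one_mem G, aff_one w0⟩
  mul_mem' := by
    intro x y hx hy
    exact ⟨mul_mem hx.1 hy.1, by rw [aff_mul, hy.2, hx.2]⟩
  inv_mem' := by
    intro x hx
    refine ⟨inv_mem hx.1, ?_⟩
    have h2 := congrArg (aff x⁻¹) hx.2
    rw [aff_inv] at h2
    exact h2.symm

lemma mem_stabSub {G : Subgroup W4} {w0 : V4} {g : W4} :
    g ∈ stabSub G w0 ↔ g ∈ G ∧ aff g w0 = w0 := Iff.rfl

/-! ### The main theorem -/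

open SemidirectProduct in
/-- **Transitivity of the monodromy action on intersection profiles.**
Let `G ≤ W = V ⋊ S₄` be a subgroup such that (i) the projection `p : G → S₄` is
surjective; (ii) the kernel of `p` restricted to `G` is exactly `{1, σ}` (i.e.
`G ∩ V = {0, ε}`); and (iii) the extension `1 → ℤ/2 → G → S₄ → 1` does not
split, i.e. no subgroup `H ≤ G` maps isomorphically onto `S₄` under `p`.
Then the affine action of `G` on `V` is transitive: `V` is a single `G`-orbit
(necessarily of size 16). -/
theorem orbit_is_everything_of_nonsplit
    (G : Subgroup W4)
    (hsurj : ∀ π : Equiv.Perm (Fin 4), ∃ g ∈ G, g.right = π)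
    (hσ : sigmaW ∈ G)
    (hker : ∀ g ∈ G, g.right = 1 → g = 1 ∨ g = sigmaW)
    (hnosplit : ¬ ∃ H : Subgroup W4, H ≤ G ∧
        Function.Bijective (fun h : H => (h : W4).right)) :
    ∀ w : V4, {u : V4 | ∃ g ∈ G, aff g w = u} = Set.univ := by
  classical
  -- lifts of the three adjacent transpositions
  obtain ⟨a, haG, har⟩ := hsurj tau1
  obtain ⟨b, hbG, hbr⟩ := hsurj tau2
  obtain ⟨d, hdG, hdr⟩ := hsurj tau3
  set c1 : B4 := eB (Multiplicative.toAdd a.left) with hc1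
  set c2 : B4 := eB (Multiplicative.toAdd b.left) with hc2
  set c3 : B4 := eB (Multiplicative.toAdd d.left) with hc3
  have ea : ∀ x : V4, eB (aff a x) = FB sw1 c1 (eB x) := eB_aff₁ a har
  have eb : ∀ x : V4, eB (aff b x) = FB sw2 c2 (eB x) := eB_aff₂ b hbr
  have ed : ∀ x : V4, eB (aff d x) = FB sw3 c3 (eB x) := eB_aff₃ d hdr
  -- values of null words at 0 are 0 or ε
  have hval : ∀ g' : W4, g' ∈ G → g'.right = 1 → aff g' 0 = 0 ∨ aff g' 0 = epsV := by
    intro g' hg hr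
    rcases hker g' hg hr with h | h
    · left; rw [h, aff_one]
    · right; rw [h, aff_sigma, zero_add]
  -- the six Coxeter-type conditions
  have cond1 : FB sw1 c1 (FB sw1 c1 zeroB) = zeroB ∨ FB sw1 c1 (FB sw1 c1 zeroB) = onesB := by
    rcases hval (a * a) (mul_mem haG haG)
        (by simp only [mul_right, har]; decide) with h | h
    · left
      have h' : aff a (aff a 0) = 0 := by rw [← aff_mul]; exact h
      have := congrArg eB h'
      rwa [ea, ea, eB_zero] at this
    · right
      have h' : aff a (aff a 0) = epsV := by rw [← aff_mul]; exact h
      have := congrArg eB h'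
      rwa [ea, ea, eB_zero, eB_eps] at this
  have cond2 : FB sw2 c2 (FB sw2 c2 zeroB) = zeroB ∨ FB sw2 c2 (FB sw2 c2 zeroB) = onesB := by
    rcases hval (b * b) (mul_mem hbG hbG)
        (by simp only [mul_right, hbr]; decide) with h | h
    · left
      have h' : aff b (aff b 0) = 0 := by rw [← aff_mul]; exact h
      have := congrArg eB h'
      rwa [eb, eb, eB_zero] at this
    · right
      have h' : aff b (aff b 0) = epsV := by rw [← aff_mul]; exact h
      have := congrArg eB h'
      rwa [eb, eb, eB_zero, eB_eps] at this
  have cond3 : FB sw3 c3 (FB sw3 c3 zeroB) = zeroB ∨ FB sw3 c3 (FB sw3 c3 zeroB) = onesB := by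
    rcases hval (d * d) (mul_mem hdG hdG)
        (by simp only [mul_right, hdr]; decide) with h | h
    · left
      have h' : aff d (aff d 0) = 0 := by rw [← aff_mul]; exact h
      have := congrArg eB h'
      rwa [ed, ed, eB_zero] at this
    · right
      have h' : aff d (aff d 0) = epsV := by rw [← aff_mul]; exact h
      have := congrArg eB h'
      rwa [ed, ed, eB_zero, eB_eps] at this
  have cond12 : FB sw1 c1 (FB sw2 c2 (FB sw1 c1 (FB sw2 c2 (FB sw1 c1 (FB sw2 c2 zeroB))))) = zeroB ∨
      FB sw1 c1 (FB sw2 c2 (FB sw1 c1 (FB sw2 c2 (FB sw1 c1 (FB sw2 c2 zeroB))))) = onesB := by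
    rcases hval (a * (b * (a * (b * (a * b)))))
        (mul_mem haG (mul_mem hbG (mul_mem haG (mul_mem hbG (mul_mem haG hbG)))))
        (by simp only [mul_right, har, hbr]; decide) with h | h
    · left
      have h' : aff a (aff b (aff a (aff b (aff a (aff b 0))))) = 0 := by
        simp only [← aff_mul]; exact h
      have := congrArg eB h'
      rwa [ea, eb, ea, eb, ea, eb, eB_zero] at this
    · right
      have h' : aff a (aff b (aff a (aff b (aff a (aff b 0))))) = epsV := by
        simp only [← aff_mul]; exact h
      have := congrArg eB h'
      rwa [ea, eb, ea, eb, ea, eb, eB_zero, eB_eps] at this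
  have cond23 : FB sw2 c2 (FB sw3 c3 (FB sw2 c2 (FB sw3 c3 (FB sw2 c2 (FB sw3 c3 zeroB))))) = zeroB ∨
      FB sw2 c2 (FB sw3 c3 (FB sw2 c2 (FB sw3 c3 (FB sw2 c2 (FB sw3 c3 zeroB))))) = onesB := by
    rcases hval (b * (d * (b * (d * (b * d)))))
        (mul_mem hbG (mul_mem hdG (mul_mem hbG (mul_mem hdG (mul_mem hbG hdG)))))
        (by simp only [mul_right, hbr, hdr]; decide) with h | h
    · left
      have h' : aff b (aff d (aff b (aff d (aff b (aff d 0))))) = 0 := by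
        simp only [← aff_mul]; exact h
      have := congrArg eB h'
      rwa [eb, ed, eb, ed, eb, ed, eB_zero] at this
    · right
      have h' : aff b (aff d (aff b (aff d (aff b (aff d 0))))) = epsV := by
        simp only [← aff_mul]; exact h
      have := congrArg eB h'
      rwa [eb, ed, eb, ed, eb, ed, eB_zero, eB_eps] at this
  have cond13 : FB sw1 c1 (FB sw3 c3 (FB sw1 c1 (FB sw3 c3 zeroB))) = zeroB ∨
      FB sw1 c1 (FB sw3 c3 (FB sw1 c1 (FB sw3 c3 zeroB))) = onesB := by
    rcases hval (a * (d * (a * d)))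
        (mul_mem haG (mul_mem hdG (mul_mem haG hdG)))
        (by simp only [mul_right, har, hdr]; decide) with h | h
    · left
      have h' : aff a (aff d (aff a (aff d 0))) = 0 := by
        simp only [← aff_mul]; exact h
      have := congrArg eB h'
      rwa [ea, ed, ea, ed, eB_zero] at this
    · right
      have h' : aff a (aff d (aff a (aff d 0))) = epsV := by
        simp only [← aff_mul]; exact h
      have := congrArg eB h'
      rwa [ea, ed, ea, ed, eB_zero, eB_eps] at this
  -- apply the combinatorial dichotomy
  rcases keyB c1 cond1 c2 cond2 cond12 c3 cond3 cond23 cond13 with hfix | htrans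
  · -- non-split case: build a splitting subgroup, contradiction
    exfalso
    obtain ⟨w', hw1, hw2, hw3⟩ := hfix
    set w0 : V4 := sB w' with hw0
    have hew0 : eB w0 = w' := eB_sB w'
    have toV : ∀ (g' : W4) (sw : B4 → B4) (cc : B4),
        (∀ x : V4, eB (aff g' x) = FB sw cc (eB x)) →
        (FB sw cc w' = w' ∨ FB sw cc w' = bxor4 w' onesB) →
        (aff g' w0 = w0 ∨ aff g' w0 = w0 + epsV) := by
      intro g' sw cc hcomm h
      rcases h with h | h
      · left
        apply eB_inj
        rw [hcomm, hew0, h]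
      · right
        apply eB_inj
        rw [hcomm, hew0, h, eB_add_eps, hew0]
    have fixa := toV a sw1 c1 ea hw1
    have fixb := toV b sw2 c2 eb hw2
    have fixd := toV d sw3 c3 ed hw3
    -- G is generated by a, b, d, σ
    have hGenSub : Subgroup.closure {a, b, d, sigmaW} ≤ G := by
      rw [Subgroup.closure_le]
      rintro x hx
      simp only [Set.mem_insert_iff, Set.mem_singleton_iff] at hx
      rcases hx with rfl | rfl | rfl | rfl
      exacts [haG, hbG, hdG, hσ]
    have hm1 : tau1 ∈ Subgroup.closure
        ((SemidirectProduct.rightHom : W4 →* Equiv.Perm (Fin 4)) '' {a, b, d, sigmaW}) :=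
      Subgroup.subset_closure ⟨a, by simp, har⟩
    have hm2 : tau2 ∈ Subgroup.closure
        ((SemidirectProduct.rightHom : W4 →* Equiv.Perm (Fin 4)) '' {a, b, d, sigmaW}) :=
      Subgroup.subset_closure ⟨b, by simp, hbr⟩
    have hm3 : tau3 ∈ Subgroup.closure
        ((SemidirectProduct.rightHom : W4 →* Equiv.Perm (Fin 4)) '' {a, b, d, sigmaW}) :=
      Subgroup.subset_closure ⟨d, by simp, hdr⟩
    have h02 : Equiv.swap (0 : Fin 4) 2 ∈ Subgroup.closure
        ((SemidirectProduct.rightHom : W4 →* Equiv.Perm (Fin 4)) '' {a, b, d, sigmaW}) := by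
      rw [show Equiv.swap (0 : Fin 4) 2 = tau1 * tau2 * tau1 from by decide]
      exact mul_mem (mul_mem hm1 hm2) hm1
    have h13 : Equiv.swap (1 : Fin 4) 3 ∈ Subgroup.closure
        ((SemidirectProduct.rightHom : W4 →* Equiv.Perm (Fin 4)) '' {a, b, d, sigmaW}) := by
      rw [show Equiv.swap (1 : Fin 4) 3 = tau2 * tau3 * tau2 from by decide]
      exact mul_mem (mul_mem hm2 hm3) hm2
    have h03 : Equiv.swap (0 : Fin 4) 3 ∈ Subgroup.closure
        ((SemidirectProduct.rightHom : W4 →* Equiv.Perm (Fin 4)) '' {a, b, d, sigmaW}) := by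
      rw [show Equiv.swap (0 : Fin 4) 3 = tau1 * (tau2 * tau3 * tau2) * tau1 from by decide]
      exact mul_mem (mul_mem hm1 (mul_mem (mul_mem hm2 hm3) hm2)) hm1
    have hswap : ∀ x y : Fin 4, Equiv.swap x y ∈ Subgroup.closure
        ((SemidirectProduct.rightHom : W4 →* Equiv.Perm (Fin 4)) '' {a, b, d, sigmaW}) := by
      intro x y
      fin_cases x <;> fin_cases y <;>
        first
          | (rw [Equiv.swap_self]; exact one_mem _)
          | exact hm1 | exact hm2 | exact hm3 | exact h02 | exact h13 | exact h03
          | (rw [Equiv.swap_comm]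
             first
               | exact hm1 | exact hm2 | exact hm3 | exact h02 | exact h13 | exact h03)
    have hlift : ∀ π : Equiv.Perm (Fin 4),
        ∃ x ∈ Subgroup.closure {a, b, d, sigmaW}, x.right = π := by
      intro π
      have hπ : π ∈ Subgroup.closure
          ((SemidirectProduct.rightHom : W4 →* Equiv.Perm (Fin 4)) '' {a, b, d, sigmaW}) := by
        have htop : Subgroup.closure {τ : Equiv.Perm (Fin 4) | τ.IsSwap} ≤ Subgroup.closure
            ((SemidirectProduct.rightHom : W4 →* Equiv.Perm (Fin 4)) '' {a, b, d, sigmaW}) := by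
          rw [Subgroup.closure_le]
          rintro τ ⟨x, y, -, rfl⟩
          exact hswap x y
        exact htop (by rw [Equiv.Perm.closure_isSwap]; exact Subgroup.mem_top π)
      rw [← MonoidHom.map_closure] at hπ
      rcases Subgroup.mem_map.1 hπ with ⟨x, hx, hxe⟩
      exact ⟨x, hx, hxe⟩
    have hGle : ∀ g ∈ G, g ∈ Subgroup.closure {a, b, d, sigmaW} := by
      intro g hg
      obtain ⟨x, hx, hxr⟩ := hlift g.right
      have hmem : g * x⁻¹ ∈ G := mul_mem hg (inv_mem (hGenSub hx))
      have hr : (g * x⁻¹).right = 1 := by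
        rw [mul_right, inv_right, hxr, mul_inv_cancel]
      rcases hker _ hmem hr with h1 | h1
      · have hgx : g = x := mul_inv_eq_one.mp h1
        rw [hgx]; exact hx
      · have hgx : g = sigmaW * x := by
          have h2 := congrArg (fun y => y * x) h1
          simpa [inv_mul_cancel_right] using h2
        rw [hgx]
        exact mul_mem (Subgroup.subset_closure (by simp)) hx
    -- every element of G fixes w0 modulo ε
    have hfixG : ∀ g ∈ G, aff g w0 = w0 ∨ aff g w0 = w0 + epsV := by
      intro g hg
      refine Subgroup.closure_induction
        (p := fun x _ => aff x w0 = w0 ∨ aff x w0 = w0 + epsV) ?_ ?_ ?_ ?_ (hGle g hg)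
      · rintro x hx
        simp only [Set.mem_insert_iff, Set.mem_singleton_iff] at hx
        rcases hx with rfl | rfl | rfl | rfl
        exacts [fixa, fixb, fixd, Or.inr (aff_sigma w0)]
      · left; exact aff_one w0
      · rintro x y - - hx hy
        rw [aff_mul]
        rcases hy with h | h <;> rw [h]
        · exact hx
        · rw [aff_eps]
          rcases hx with h' | h'
          · right; rw [h']
          · left; rw [h', eps_add_eps]
      · rintro x - hx
        rcases hx with h | h
        · left
          have h2 := congrArg (aff x⁻¹) h
          rw [aff_inv] at h2
          exact h2.symm
        · right
          have h2 : aff x⁻¹ (w0 + epsV) = w0 := by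
            have h3 := congrArg (aff x⁻¹) h
            rw [aff_inv] at h3
            exact h3.symm
          calc aff x⁻¹ w0 = aff x⁻¹ (w0 + epsV + epsV) := by rw [eps_add_eps]
            _ = aff x⁻¹ (w0 + epsV) + epsV := by rw [aff_eps]
            _ = w0 + epsV := by rw [h2]
    -- the splitting subgroup
    refine hnosplit ⟨stabSub G w0, fun g hg => (mem_stabSub.mp hg).1, ?_, ?_⟩
    · -- injective
      intro x y hxy
      have hxmem := mem_stabSub.mp x.2
      have hymem := mem_stabSub.mp y.2
      have hmem : (x : W4) * (y : W4)⁻¹ ∈ G := mul_mem hxmem.1 (inv_mem hymem.1)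
      have hxy' : (x : W4).right = (y : W4).right := hxy
      have hr : ((x : W4) * (y : W4)⁻¹).right = 1 := by
        rw [mul_right, inv_right, hxy', mul_inv_cancel]
      rcases hker _ hmem hr with h | h
      · exact Subtype.ext (mul_inv_eq_one.mp h)
      · exfalso
        have hfix : aff ((x : W4) * (y : W4)⁻¹) w0 = w0 := by
          rw [aff_mul]
          have h2 : aff (y : W4)⁻¹ w0 = w0 := by
            have h3 := congrArg (aff (y : W4)⁻¹) hymem.2
            rw [aff_inv] at h3
            exact h3.symm
          rw [h2, hxmem.2]
        rw [h, aff_sigma] at hfix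
        exact add_eps_ne w0 hfix
    · -- surjective
      intro π
      obtain ⟨g, hgG, hgr⟩ := hsurj π
      rcases hfixG g hgG with h | h
      · exact ⟨⟨g, mem_stabSub.mpr ⟨hgG, h⟩⟩, hgr⟩
      · refine ⟨⟨sigmaW * g, mem_stabSub.mpr ⟨mul_mem hσ hgG, ?_⟩⟩, ?_⟩
        · rw [aff_mul, h, aff_sigma, eps_add_eps]
        · show (sigmaW * g).right = π
          rw [mul_right, sigma_right, one_mul, hgr]
  · -- transitive case
    have reach : ∀ n : ℕ, ∀ bb ∈ orbL c1 c2 c3 n, ∃ g ∈ G, eB (aff g 0) = bb := by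
      intro n
      induction n with
      | zero =>
        intro bb hbb
        simp only [orbL, List.mem_singleton] at hbb
        exact ⟨1, one_mem G, by rw [aff_one, eB_zero, hbb]⟩
      | succ n ih =>
        intro bb hbb
        simp only [orbL, stepL, List.mem_union_iff, List.mem_map] at hbb
        rcases hbb with ((((hbb | ⟨y, hy, rfl⟩) | ⟨y, hy, rfl⟩) | ⟨y, hy, rfl⟩) | ⟨y, hy, rfl⟩)
        · exact ih bb hbb
        · obtain ⟨g, hg, hgy⟩ := ih y hy
          exact ⟨a * g, mul_mem haG hg, by rw [aff_mul, ea, hgy]⟩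
        · obtain ⟨g, hg, hgy⟩ := ih y hy
          exact ⟨b * g, mul_mem hbG hg, by rw [aff_mul, eb, hgy]⟩
        · obtain ⟨g, hg, hgy⟩ := ih y hy
          exact ⟨d * g, mul_mem hdG hg, by rw [aff_mul, ed, hgy]⟩
        · obtain ⟨g, hg, hgy⟩ := ih y hy
          exact ⟨sigmaW * g, mul_mem hσ hg, by rw [aff_mul, aff_sigma, eB_add_eps, hgy]⟩
    intro w
    apply Set.eq_univ_of_forall
    intro u
    show ∃ g ∈ G, aff g w = u
    obtain ⟨g1, hg1, h1⟩ := reach 6 (eB w) (htrans (eB w))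
    obtain ⟨g2, hg2, h2⟩ := reach 6 (eB u) (htrans (eB u))
    have hw : aff g1 0 = w := eB_inj h1
    have hu : aff g2 0 = u := eB_inj h2
    refine ⟨g2 * g1⁻¹, mul_mem hg2 (inv_mem hg1), ?_⟩
    rw [aff_mul, ← hw, aff_inv, hu]
end

section
/- For all complex numbers s, t, x, y, z, w, if (s, t) ≠ (0, 0) and (x, y, z, w) ≠ (0, 0, 0, 0), then the six quantities s·x², t·y², (t+s)·z², (t+2s)·w², x³ + z³ + 2w³, and y³ + z³ + w³ do not all vanish simultaneously. (These are, up to the nonzero factor 3, the partial derivatives of the bihomogeneous polynomial F = s·x³ + t·y³ + (t+s)·z³ + (t+2s)·w³ of bidegree (1,3); by the Jacobian criterion and the bihomogeneous Euler relations, this statement expresses that the hypersurface F = 0 in ℙ¹ × ℙ³ over ℂ is smooth.) -/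
/-- **Smoothness of the diagonal cubic surface fibration.**
For all complex numbers `s, t, x, y, z, w`, if `(s, t) ≠ (0, 0)` and
`(x, y, z, w) ≠ (0, 0, 0, 0)`, then the six quantities
`s·x²`, `t·y²`, `(t+s)·z²`, `(t+2s)·w²`, `x³ + z³ + 2w³`, `y³ + z³ + w³`
do not all vanish simultaneously.  (Up to the nonzero factor 3, these are the
partial derivatives of `F = s·x³ + t·y³ + (t+s)·z³ + (t+2s)·w³`; by the Jacobian
criterion and the bihomogeneous Euler relations this says that the hypersurface
`F = 0` in `ℙ¹ × ℙ³` over `ℂ` is smooth.) -/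
theorem diagonal_cubic_fibration_smooth
    (s t x y z w : ℂ)
    (hst : (s, t) ≠ (0, 0))
    (hxyzw : (x, y, z, w) ≠ ((0 : ℂ), (0 : ℂ), (0 : ℂ), (0 : ℂ))) :
    ¬ (s * x ^ 2 = 0 ∧ t * y ^ 2 = 0 ∧ (t + s) * z ^ 2 = 0 ∧
        (t + 2 * s) * w ^ 2 = 0 ∧ x ^ 3 + z ^ 3 + 2 * w ^ 3 = 0 ∧
        y ^ 3 + z ^ 3 + w ^ 3 = 0) := by
  rintro ⟨e1, e2, e3, e4, e5, e6⟩
  apply hxyzw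
  have pow2 : ∀ a : ℂ, a ^ 2 = 0 → a = 0 := fun a h => by
    exact pow_eq_zero_iff (two_ne_zero) |>.mp h
  have pow3 : ∀ a : ℂ, a ^ 3 = 0 → a = 0 := fun a h => by
    exact pow_eq_zero_iff (three_ne_zero) |>.mp h
  by_cases hs : s = 0
  · have ht : t ≠ 0 := fun h => hst (by simp [hs, h])
    have hy : y = 0 := pow2 y ((mul_eq_zero.mp e2).resolve_left ht)
    have hz : z = 0 := by
      have : (t + s) ≠ 0 := by simp [hs, ht]
      exact pow2 z ((mul_eq_zero.mp e3).resolve_left this)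
    have hw : w = 0 := pow3 w (by rw [hy, hz] at e6; simpa using e6)
    have hx : x = 0 := pow3 x (by rw [hz, hw] at e5; simpa using e5)
    simp [hx, hy, hz, hw]
  · have hx : x = 0 := pow2 x ((mul_eq_zero.mp e1).resolve_left hs)
    by_cases ht : t = 0
    · have hz : z = 0 := by
        have : (t + s) ≠ 0 := by simp [ht, hs]
        exact pow2 z ((mul_eq_zero.mp e3).resolve_left this)
      have hw : w = 0 := by
        have : (t + 2 * s) ≠ 0 := by simp [ht, hs]
        exact pow2 w ((mul_eq_zero.mp e4).resolve_left this)
      have hy : y = 0 := pow3 y (by rw [hz, hw] at e6; simpa using e6)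
      simp [hx, hy, hz, hw]
    · have hy : y = 0 := pow2 y ((mul_eq_zero.mp e2).resolve_left ht)
      rw [hx] at e5
      rw [hy] at e6
      have hw : w = 0 := pow3 w (by linear_combination e5 - e6)
      have hz : z = 0 := pow3 z (by rw [hw] at e6; simpa using e6)
      simp [hx, hy, hz, hw]
end
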